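/- For the 4×4 matrix G with rows [1−γ, n(γ−1), 1/C₁₁, 0], [−n, 1, 0, 1/C₆₆], [C, −nC, γ−1, n], [−nC, n²C, n(1−γ), −1], where γ = 1 + C₁₂/C₁₁ and C = C₂₂ − C₁₂²/C₁₁, in the isotropic case (C₁₁ = 2C₆₆/(2−γ), C = 2C₆₆γ), the eigenvalues of G are n−1, n+1, 1−n, −1−n. -/

import Mathlib

open Polynomial Matrix


set_option maxHeartbeats 1000000 in
lemma det_fin_four' {R : Type*} [CommRing R] (M : Matrix (Fin 4) (Fin 4) R) :
    M.det =
      M 0 0 * (M 1 1 * (M 2 2 * M 3 3 - M 2 3 * M 3 2) - M 1 2 * (M 2 1 * M 3 3 - M 2 3 * M 3 1)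
        + M 1 3 * (M 2 1 * M 3 2 - M 2 2 * M 3 1))
    - M 0 1 * (M 1 0 * (M 2 2 * M 3 3 - M 2 3 * M 3 2) - M 1 2 * (M 2 0 * M 3 3 - M 2 3 * M 3 0)
        + M 1 3 * (M 2 0 * M 3 2 - M 2 2 * M 3 0))
    + M 0 2 * (M 1 0 * (M 2 1 * M 3 3 - M 2 3 * M 3 1) - M 1 1 * (M 2 0 * M 3 3 - M 2 3 * M 3 0)
        + M 1 3 * (M 2 0 * M 3 1 - M 2 1 * M 3 0))
    - M 0 3 * (M 1 0 * (M 2 1 * M 3 2 - M 2 2 * M 3 1) - M 1 1 * (M 2 0 * M 3 2 - M 2 2 * M 3 0)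
        + M 1 2 * (M 2 0 * M 3 1 - M 2 1 * M 3 0)) := by
  simp [Matrix.det_succ_row_zero, Fin.sum_univ_succ]
  simp (config := {decide := true}) [Fin.succAbove]
  ring

set_option maxHeartbeats 1000000 in
lemma charm4 (a b c d e f g h i j k l m o p q : ℝ) :
    charmatrix !![a,b,c,d; e,f,g,h; i,j,k,l; m,o,p,q] =
    !![X - Polynomial.C a, -Polynomial.C b, -Polynomial.C c, -Polynomial.C d;
       -Polynomial.C e, X - Polynomial.C f, -Polynomial.C g, -Polynomial.C h;
       -Polynomial.C i, -Polynomial.C j, X - Polynomial.C k, -Polynomial.C l;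
       -Polynomial.C m, -Polynomial.C o, -Polynomial.C p, X - Polynomial.C q] := by
  ext i j
  fin_cases i <;> fin_cases j <;>
    simp [charmatrix_apply_eq, charmatrix_apply_ne]

set_option maxHeartbeats 4000000 in
/-- In the isotropic case the eigenvalues of the 4×4 system matrix `G`
are `n-1`, `n+1`, `1-n`, `-1-n`. -/
theorem isotropic_eigenvalues (n : ℤ) (C₆₆ γ : ℝ) (hC : 0 < C₆₆)
    (hγ : γ ∈ Set.Ioo (0:ℝ) 2)
    (C₁₁ C₁₂ C₂₂ C : ℝ)
    (h11 : C₁₁ = 2 * C₆₆ / (2 - γ))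
    (h12 : C₁₂ = C₁₁ * (γ - 1))
    (h22 : C₂₂ = C₁₁)
    (hC' : C = 2 * C₆₆ * γ)
    (G : Matrix (Fin 4) (Fin 4) ℝ)
    (hG : G = !![1 - γ, (n : ℝ) * (γ - 1), C₁₁⁻¹, 0;
                 -(n : ℝ), 1, 0, C₆₆⁻¹;
                 C, -(n : ℝ) * C, γ - 1, (n : ℝ);
                 -(n : ℝ) * C, (n : ℝ)^2 * C, (n : ℝ) * (1 - γ), -1]) :
    G.charpoly =
      (X - Polynomial.C ((n : ℝ) - 1)) * (X - Polynomial.C ((n : ℝ) + 1)) *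
      (X - Polynomial.C (1 - (n : ℝ))) * (X - Polynomial.C (-1 - (n : ℝ))) := by
  obtain ⟨h0, h2⟩ := hγ
  have hne : (2 - γ) ≠ 0 := by linarith
  have hC66 : C₆₆ ≠ 0 := ne_of_gt hC
  have h11' : C₁₁⁻¹ = (2 - γ) / (2 * C₆₆) := by
    rw [h11]; field_simp
  subst hG hC'
  rw [Matrix.charpoly, charm4, det_fin_four']
  apply Polynomial.funext
  intro x
  simp [eval_mul, eval_add, eval_sub, eval_pow, eval_neg, h11']
  field_simp
  ring
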